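/- If G is an ergodic strictly unbalanced signed digraph, then the steady state white-color distribution of the voter model is x = (1/2)·1, independent of the initial distribution x_0. -/
import Mathlib


open Matrix Filter Topology Finset

/-- A directed walk of given length in a digraph with edge relation `E`. -/
def DiWalk {V : Type*} (E : V → V → Prop) : ℕ → V → V → Prop
  | 0, i, j => i = j
  | n + 1, i, j => ∃ k, E i k ∧ DiWalk E n k j

/-- Strong connectivity: every node reaches every other node by some walk. -/
def DiStronglyConnected {V : Type*} (E : V → V → Prop) : Prop :=
  ∀ i j : V, ∃ n : ℕ, DiWalk E n i j

/-- Aperiodicity: the gcd of the lengths of all (positive-length) closed walks is 1. -/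
def DiAperiodic {V : Type*} (E : V → V → Prop) : Prop :=
  ∀ d : ℕ, (∀ n : ℕ, 0 < n → (∃ i, DiWalk E n i i) → d ∣ n) → d = 1

/-- A signed directed walk of given length and total sign `s` (product of edge signs). -/
def SWalk {V : Type*} (E : V → V → Prop) (σ : V → V → ℤ) : ℕ → ℤ → V → V → Prop
  | 0, s, i, j => i = j ∧ s = 1
  | n + 1, s, i, j => ∃ k s', E i k ∧ SWalk E σ n s' k j ∧ s = σ i k * s'

/-- Balanced signed digraph: a bipartition with positive edges inside parts,
negative edges across. -/
def SBalancedG {V : Type*} (E : V → V → Prop) (σ : V → V → ℤ) : Prop :=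
  ∃ S : Set V, ∀ i j, E i j → (σ i j = 1 ↔ (i ∈ S ↔ j ∈ S))

/-- Anti-balanced signed digraph: negative edges inside parts, positive edges across. -/
def SAntiBalancedG {V : Type*} (E : V → V → Prop) (σ : V → V → ℤ) : Prop :=
  ∃ S : Set V, ∀ i j, E i j → (σ i j = -1 ↔ (i ∈ S ↔ j ∈ S))

/-- Weighted out-degree `d_i = Σ_j |A_{ij}|` of a signed weighted digraph. -/
noncomputable def sdeg {V : Type*} [Fintype V] (A : Matrix V V ℝ) (i : V) : ℝ :=
  ∑ j, |A i j|

/-- The signed transition matrix `P = D⁻¹A`. -/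
noncomputable def signedP {V : Type*} [Fintype V] (A : Matrix V V ℝ) : Matrix V V ℝ :=
  Matrix.of fun i j => A i j / sdeg A i

/-- The unsigned transition matrix `P̄ = D⁻¹|A|`. -/
noncomputable def unsignedP {V : Type*} [Fintype V] (A : Matrix V V ℝ) : Matrix V V ℝ :=
  Matrix.of fun i j => |A i j| / sdeg A i

/-- The vector `g⁻ = D⁻¹A⁻1` of weighted fractions of outgoing negative edges. -/
noncomputable def gneg {V : Type*} [Fintype V] (A : Matrix V V ℝ) (i : V) : ℝ :=
  (∑ j, max (-(A i j)) 0) / sdeg A i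

/-- Ergodicity of the underlying (unsigned) digraph of a weighted signed digraph. -/
def SErgodic {V : Type*} (A : Matrix V V ℝ) : Prop :=
  DiStronglyConnected (fun i j => A i j ≠ 0) ∧ DiAperiodic (fun i j => A i j ≠ 0)

/-- Balanced weighted signed digraph. -/
def SBalancedM {V : Type*} (A : Matrix V V ℝ) : Prop :=
  ∃ S : Set V, ∀ i j, A i j ≠ 0 → (0 < A i j ↔ (i ∈ S ↔ j ∈ S))

/-- Anti-balanced weighted signed digraph. -/
def SAntiBalancedM {V : Type*} (A : Matrix V V ℝ) : Prop :=
  ∃ S : Set V, ∀ i j, A i j ≠ 0 → (A i j < 0 ↔ (i ∈ S ↔ j ∈ S))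

/-- `π` is a stationary distribution of the unsigned chain `P̄ = D⁻¹|A|`. -/
def SStationary {V : Type*} [Fintype V] (A : Matrix V V ℝ) (π : V → ℝ) : Prop :=
  (∀ i, 0 ≤ π i) ∧ (∑ i, π i = 1) ∧ ∀ j, ∑ i, π i * unsignedP A i j = π j

set_option linter.unusedSectionVars false

noncomputable def Msgn {V : Type*} (A : Matrix V V ℝ) (i j : V) : ℤ :=
  if 0 < A i j then 1 else -1

section Walks
variable {V : Type*} {E : V → V → Prop} {σ : V → V → ℤ}

lemma swalk_sign (hσ : ∀ i j, σ i j = 1 ∨ σ i j = -1) :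
    ∀ {n : ℕ} {s : ℤ} {i j : V}, SWalk E σ n s i j → s = 1 ∨ s = -1 := by
  intro n
  induction n with
  | zero => intro s i j h; exact Or.inl h.2
  | succ n ih =>
    rintro s i j ⟨k, s', hE, hw, rfl⟩
    rcases hσ i k with h1 | h1 <;> rcases ih hw with h2 | h2 <;> simp [h1, h2]

lemma swalk_diwalk : ∀ {n : ℕ} {s : ℤ} {i j : V}, SWalk E σ n s i j → DiWalk E n i j := by
  intro n
  induction n with
  | zero => intro s i j h; exact h.1
  | succ n ih => rintro s i j ⟨k, s', hE, hw, rfl⟩; exact ⟨k, hE, ih hw⟩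

lemma diwalk_swalk : ∀ {n : ℕ} {i j : V}, DiWalk E n i j → ∃ s, SWalk E σ n s i j := by
  intro n
  induction n with
  | zero => intro i j h; exact ⟨1, h, rfl⟩
  | succ n ih =>
    rintro i j ⟨k, hE, hw⟩
    obtain ⟨s, hs⟩ := ih hw
    exact ⟨σ i k * s, k, s, hE, hs, rfl⟩

lemma swalk_concat : ∀ {n m : ℕ} {s t : ℤ} {i j k : V},
    SWalk E σ n s i j → SWalk E σ m t j k → SWalk E σ (n + m) (s * t) i k := by
  intro n
  induction n with
  | zero =>
    rintro m s t i j k ⟨rfl, rfl⟩ h2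
    simpa using h2
  | succ n ih =>
    rintro m s t i j k ⟨l, s', hE, hw, rfl⟩ h2
    have hlen : n + 1 + m = (n + m) + 1 := by omega
    rw [hlen]
    exact ⟨l, s' * t, hE, ih hw h2, by ring⟩

lemma swalk_repeat {n : ℕ} {s : ℤ} {i : V} (h : SWalk E σ n s i i) :
    ∀ k : ℕ, SWalk E σ (k * n) (s ^ k) i i := by
  intro k
  induction k with
  | zero =>
    have : SWalk E σ 0 1 i i := ⟨rfl, rfl⟩
    simpa using this
  | succ k ih =>
    have := swalk_concat ih h
    rw [Nat.succ_mul, pow_succ]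
    exact this

end Walks

lemma msgn_pm {V : Type*} (A : Matrix V V ℝ) (i j : V) : Msgn A i j = 1 ∨ Msgn A i j = -1 := by
  unfold Msgn; split <;> simp

section Graph
variable {V : Type*} {A : Matrix V V ℝ}

lemma exists_neg_closed (hsc : DiStronglyConnected (fun i j => A i j ≠ 0))
    (hnb : ¬ SBalancedM A) (v : V) :
    ∃ q, SWalk (fun i j => A i j ≠ 0) (Msgn A) q (-1) v v := by
  by_contra hcon
  push_neg at hcon
  have hclosed : ∀ {n : ℕ} {s : ℤ}, SWalk (fun i j => A i j ≠ 0) (Msgn A) n s v v → s = 1 := by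
    intro n s h
    rcases swalk_sign (msgn_pm A) h with h1 | h1
    · exact h1
    · exact absurd (h1 ▸ h) (hcon n)
  have hreach : ∀ j, ∃ n s, SWalk (fun i j => A i j ≠ 0) (Msgn A) n s v j := fun j => by
    obtain ⟨n, hw⟩ := hsc v j
    obtain ⟨s, hs⟩ := diwalk_swalk hw
    exact ⟨n, s, hs⟩
  have huniq : ∀ {j : V} {n m : ℕ} {s t : ℤ}, SWalk (fun i j => A i j ≠ 0) (Msgn A) n s v j →
      SWalk (fun i j => A i j ≠ 0) (Msgn A) m t v j → s = t := by
    intro j n m s t h1 h2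
    obtain ⟨l, hwb⟩ := hsc j v
    obtain ⟨u, hu⟩ := diwalk_swalk hwb
    have e1 := hclosed (swalk_concat h1 hu)
    have e2 := hclosed (swalk_concat h2 hu)
    have hu0 : u ≠ 0 := by rcases swalk_sign (msgn_pm A) hu with h | h <;> simp [h]
    exact mul_right_cancel₀ hu0 (e1.trans e2.symm)
  apply hnb
  refine ⟨{j | ∃ n, SWalk (fun i j => A i j ≠ 0) (Msgn A) n 1 v j}, ?_⟩
  intro i j hij
  obtain ⟨n, s, hs⟩ := hreach i
  have hone : SWalk (fun i j => A i j ≠ 0) (Msgn A) 1 (Msgn A i j) i j :=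
    ⟨j, 1, hij, ⟨rfl, rfl⟩, (mul_one _).symm⟩
  have hwj := swalk_concat hs hone
  have hiS : i ∈ {j | ∃ n, SWalk (fun i j => A i j ≠ 0) (Msgn A) n 1 v j} ↔ s = 1 := by
    constructor
    · rintro ⟨m, hm⟩; exact huniq hs hm
    · rintro rfl; exact ⟨n, hs⟩
  have hjS : j ∈ {j | ∃ n, SWalk (fun i j => A i j ≠ 0) (Msgn A) n 1 v j} ↔ s * Msgn A i j = 1 := by
    constructor
    · rintro ⟨m, hm⟩; exact huniq hwj hm
    · intro h; exact ⟨n + 1, h ▸ hwj⟩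
  have hσval : 0 < A i j ↔ Msgn A i j = 1 := by
    unfold Msgn; split <;> simp_all
  rw [hσval, hiS, hjS]
  rcases swalk_sign (msgn_pm A) hs with h | h <;> rcases msgn_pm A i j with h2 | h2 <;>
    rw [h, h2] <;> norm_num

lemma exists_odd_pos_closed (hsc : DiStronglyConnected (fun i j => A i j ≠ 0))
    (hap : DiAperiodic (fun i j => A i j ≠ 0))
    (hna : ¬ SAntiBalancedM A) (v : V) {q : ℕ}
    (hq : SWalk (fun i j => A i j ≠ 0) (Msgn A) q (-1) v v) :
    ∃ p, Odd p ∧ SWalk (fun i j => A i j ≠ 0) (Msgn A) p 1 v v := by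
  by_contra hcon
  push_neg at hcon
  have hpos_even : ∀ {n : ℕ}, SWalk (fun i j => A i j ≠ 0) (Msgn A) n 1 v v → Even n := by
    intro n h
    by_contra he
    exact hcon n (Nat.not_even_iff_odd.mp he) h
  have hneg_parity : ∀ {n : ℕ}, SWalk (fun i j => A i j ≠ 0) (Msgn A) n (-1) v v →
      (Even n ↔ Even q) := by
    intro n h
    have hcc := swalk_concat h hq
    norm_num at hcc
    exact Nat.even_add.mp (hpos_even hcc)
  rcases Nat.even_or_odd q with hqe | hqo
  · -- all closed walks even : contradiction with aperiodicity
    have hall_even : ∀ {n : ℕ} {s : ℤ}, SWalk (fun i j => A i j ≠ 0) (Msgn A) n s v v → Even n := by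
      intro n s h
      rcases swalk_sign (msgn_pm A) h with rfl | rfl
      · exact hpos_even h
      · exact (hneg_parity h).mpr hqe
    have h21 : (2 : ℕ) = 1 := by
      apply hap 2
      rintro n hn ⟨i, hw⟩
      obtain ⟨a, hwa⟩ := hsc v i
      obtain ⟨b, hwb⟩ := hsc i v
      obtain ⟨s1, h1⟩ := diwalk_swalk (σ := Msgn A) hwa
      obtain ⟨s2, h2⟩ := diwalk_swalk (σ := Msgn A) hwb
      obtain ⟨s, hs⟩ := diwalk_swalk (σ := Msgn A) hw
      have he1 : Even (a + b) := hall_even (swalk_concat h1 h2)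
      have he2 : Even (a + (n + b)) := hall_even (swalk_concat h1 (swalk_concat hs h2))
      rw [Nat.even_iff] at he1 he2
      omega
    norm_num at h21
  · -- q odd : anti-balanced, contradiction
    have hval : ∀ {k : ℕ} {w : ℤ}, SWalk (fun i j => A i j ≠ 0) (Msgn A) k w v v →
        w = (-1 : ℤ) ^ k := by
      intro k w h
      rcases swalk_sign (msgn_pm A) h with rfl | rfl
      · rw [Even.neg_one_pow (hpos_even h)]
      · have hk : ¬ Even k := fun he => (Nat.not_odd_iff_even.mpr ((hneg_parity h).mp he)) hqo
        rw [Odd.neg_one_pow (Nat.not_even_iff_odd.mp hk)]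
    have hrho : ∀ {j : V} {n m : ℕ} {s t : ℤ}, SWalk (fun i j => A i j ≠ 0) (Msgn A) n s v j →
        SWalk (fun i j => A i j ≠ 0) (Msgn A) m t v j →
        s * (-1 : ℤ) ^ n = t * (-1 : ℤ) ^ m := by
      intro j n m s t h1 h2
      obtain ⟨l, hwb⟩ := hsc j v
      obtain ⟨u, hu⟩ := diwalk_swalk hwb
      have e1 := hval (swalk_concat h1 hu)
      have e2 := hval (swalk_concat h2 hu)
      rw [pow_add] at e1 e2
      have hu2 : u = 1 ∨ u = -1 := swalk_sign (msgn_pm A) hu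
      rcases Nat.even_or_odd n with hn | hn <;> rcases Nat.even_or_odd m with hm | hm <;>
        rcases Nat.even_or_odd l with hl | hl <;> rcases hu2 with rfl | rfl <;>
        simp only [Even.neg_one_pow, Odd.neg_one_pow, hn, hm, hl] at e1 e2 ⊢ <;> linarith
    apply hna
    refine ⟨{j | ∃ n s, SWalk (fun i j => A i j ≠ 0) (Msgn A) n s v j ∧ s * (-1 : ℤ) ^ n = 1}, ?_⟩
    intro i j hij
    obtain ⟨n, hwd⟩ := hsc v i
    obtain ⟨s, hs⟩ := diwalk_swalk hwd
    have hone : SWalk (fun i j => A i j ≠ 0) (Msgn A) 1 (Msgn A i j) i j :=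
      ⟨j, 1, hij, ⟨rfl, rfl⟩, (mul_one _).symm⟩
    have hwj := swalk_concat hs hone
    have hiS : i ∈ {j | ∃ n s, SWalk (fun i j => A i j ≠ 0) (Msgn A) n s v j ∧
        s * (-1 : ℤ) ^ n = 1} ↔ s * (-1 : ℤ) ^ n = 1 := by
      constructor
      · rintro ⟨m, t, hm, hm1⟩
        rw [hrho hs hm, hm1]
      · intro h; exact ⟨n, s, hs, h⟩
    have hjS : j ∈ {j | ∃ n s, SWalk (fun i j => A i j ≠ 0) (Msgn A) n s v j ∧
        s * (-1 : ℤ) ^ n = 1} ↔ s * Msgn A i j * (-1 : ℤ) ^ (n + 1) = 1 := by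
      constructor
      · rintro ⟨m, t, hm, hm1⟩
        rw [hrho hwj hm, hm1]
      · intro h; exact ⟨n + 1, s * Msgn A i j, hwj, h⟩
    have hσval : A i j < 0 ↔ Msgn A i j = -1 := by
      unfold Msgn
      rcases lt_trichotomy (A i j) 0 with h | h | h
      · rw [if_neg (by linarith)]; simp [h]
      · exact absurd h hij
      · rw [if_pos h]; simp; linarith
    rw [hσval, hiS, hjS, pow_add]
    have hpow : (-1 : ℤ) ^ n = 1 ∨ (-1 : ℤ) ^ n = -1 := by
      rcases Nat.even_or_odd n with hn | hn
      · exact Or.inl (Even.neg_one_pow hn)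
      · exact Or.inr (Odd.neg_one_pow hn)
    rcases swalk_sign (msgn_pm A) hs with h | h <;> rcases msgn_pm A i j with h2 | h2 <;>
      rcases hpow with h3 | h3 <;> rw [h, h2, h3] <;> norm_num

end Graph

section MatrixLemmas
variable {V : Type*} [Fintype V] [DecidableEq V] {A : Matrix V V ℝ}
  (hd : ∀ i, 0 < sdeg A i)
include hd

lemma unsignedP_nonneg (i j : V) : 0 ≤ unsignedP A i j :=
  div_nonneg (abs_nonneg _) (le_of_lt (hd i))

lemma abs_signedP (i j : V) : |signedP A i j| = unsignedP A i j := by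
  simp only [signedP, unsignedP, Matrix.of_apply]
  rw [abs_div, abs_of_pos (hd i)]

lemma unsignedP_rowsum (i : V) : ∑ j, unsignedP A i j = 1 := by
  simp only [unsignedP, Matrix.of_apply]
  rw [← Finset.sum_div]
  exact div_self (ne_of_gt (hd i))

lemma unsignedP_pow_nonneg : ∀ (n : ℕ) (i j : V), 0 ≤ (unsignedP A ^ n) i j := by
  intro n
  induction n with
  | zero => intro i j; rw [pow_zero]; by_cases h : i = j <;> simp [Matrix.one_apply, h]
  | succ n ih =>
    intro i j
    rw [pow_succ, Matrix.mul_apply]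
    exact Finset.sum_nonneg fun k _ => mul_nonneg (ih i k) (unsignedP_nonneg hd k j)

lemma unsignedP_pow_rowsum : ∀ (n : ℕ) (i : V), ∑ j, (unsignedP A ^ n) i j = 1 := by
  intro n
  induction n with
  | zero => intro i; simp [Matrix.one_apply]
  | succ n ih =>
    intro i
    simp only [pow_succ, Matrix.mul_apply]
    rw [Finset.sum_comm]
    calc ∑ k, ∑ j, (unsignedP A ^ n) i k * unsignedP A k j
        = ∑ k, (unsignedP A ^ n) i k * ∑ j, unsignedP A k j := by
          simp [Finset.mul_sum]
      _ = 1 := by simp only [unsignedP_rowsum hd, mul_one]; exact ih i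

lemma abs_signedP_pow_le : ∀ (n : ℕ) (i j : V), |(signedP A ^ n) i j| ≤ (unsignedP A ^ n) i j := by
  intro n
  induction n with
  | zero => intro i j; by_cases h : i = j <;> simp [Matrix.one_apply, h]
  | succ n ih =>
    intro i j
    rw [pow_succ, pow_succ, Matrix.mul_apply, Matrix.mul_apply]
    calc |∑ k, (signedP A ^ n) i k * signedP A k j|
        ≤ ∑ k, |(signedP A ^ n) i k * signedP A k j| := Finset.abs_sum_le_sum_abs _ _
      _ ≤ ∑ k, (unsignedP A ^ n) i k * unsignedP A k j := by
          apply Finset.sum_le_sum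
          intro k _
          rw [abs_mul, abs_signedP hd]
          exact mul_le_mul_of_nonneg_right (ih i k) (unsignedP_nonneg hd k j)

lemma unsignedP_pow_pos : ∀ {n : ℕ} {i j : V},
    DiWalk (fun i j => A i j ≠ 0) n i j → 0 < (unsignedP A ^ n) i j := by
  intro n
  induction n with
  | zero => intro i j h; rw [show i = j from h]; simp [Matrix.one_apply]
  | succ n ih =>
    rintro i j ⟨k, hE, hw⟩
    rw [pow_succ', Matrix.mul_apply]
    apply Finset.sum_pos'
    · intro l _
      exact mul_nonneg (unsignedP_nonneg hd i l) (unsignedP_pow_nonneg hd n l j)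
    · refine ⟨k, Finset.mem_univ k, mul_pos ?_ (ih hw)⟩
      simp only [unsignedP, Matrix.of_apply]
      exact div_pos (abs_pos.mpr hE) (hd i)

end MatrixLemmas

section Key
variable {V : Type*} [Fintype V] [DecidableEq V] {A : Matrix V V ℝ}
  (hd : ∀ i, 0 < sdeg A i)
include hd

lemma swalk_diwalk' {E : V → V → Prop} {σ : V → V → ℤ} :
    ∀ {n : ℕ} {s : ℤ} {i j : V}, SWalk E σ n s i j → DiWalk E n i j := by
  intro n
  induction n with
  | zero => intro s i j h; exact h.1
  | succ n ih => rintro s i j ⟨k, s', hE, hw, rfl⟩; exact ⟨k, hE, ih hw⟩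

lemma signedP_eq_sign_mul {i j : V} (hE : A i j ≠ 0) :
    signedP A i j = (Msgn A i j : ℝ) * unsignedP A i j := by
  simp only [signedP, unsignedP, Matrix.of_apply, Msgn]
  rcases lt_or_gt_of_ne hE with h | h
  · rw [if_neg (not_lt.mpr h.le), abs_of_neg h]; push_cast; ring
  · rw [if_pos h, abs_of_pos h]; push_cast; ring

lemma signedP_pow_sign : ∀ {n : ℕ} {s : ℤ} {i j : V},
    SWalk (fun i j => A i j ≠ 0) (Msgn A) n s i j →
    |(signedP A ^ n) i j| = (unsignedP A ^ n) i j →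
    (signedP A ^ n) i j = (s : ℝ) * (unsignedP A ^ n) i j := by
  intro n
  induction n with
  | zero =>
    rintro s i j ⟨rfl, rfl⟩ _
    simp
  | succ n ih =>
    rintro s i j ⟨k0, s', hE, hw, rfl⟩ heq
    set t : V → ℝ := fun k => signedP A i k * (signedP A ^ n) k j with ht
    set b : V → ℝ := fun k => unsignedP A i k * (unsignedP A ^ n) k j with hb
    have hentry : (signedP A ^ (n+1)) i j = ∑ k, t k := by rw [pow_succ', Matrix.mul_apply]
    have hbentry : (unsignedP A ^ (n+1)) i j = ∑ k, b k := by rw [pow_succ', Matrix.mul_apply]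
    have habs_le : ∀ k, |t k| ≤ b k := fun k => by
      rw [ht, hb, abs_mul, abs_signedP hd]
      exact mul_le_mul_of_nonneg_left (abs_signedP_pow_le hd n k j) (unsignedP_nonneg hd i k)
    have h1 : |∑ k, t k| = ∑ k, b k := by rw [← hentry, ← hbentry]; exact heq
    have h2 : ∑ k, |t k| = ∑ k, b k := by
      refine le_antisymm (Finset.sum_le_sum fun k _ => habs_le k) ?_
      rw [← h1]; exact Finset.abs_sum_le_sum_abs _ _
    have hk_eq : ∀ k, |t k| = b k := by
      intro k
      have hzero : ∑ k ∈ Finset.univ, (b k - |t k|) = 0 := by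
        rw [Finset.sum_sub_distrib, h2, sub_self]
      have := (Finset.sum_eq_zero_iff_of_nonneg
        (fun k _ => sub_nonneg.mpr (habs_le k))).mp hzero k (Finset.mem_univ k)
      linarith [this]
    have h3 : |∑ k, t k| = ∑ k, |t k| := by rw [h1, h2]
    have hQik0 : 0 < unsignedP A i k0 := by
      simp only [unsignedP, Matrix.of_apply]
      exact div_pos (abs_pos.mpr hE) (hd i)
    have hPb_pos : 0 < (unsignedP A ^ n) k0 j := unsignedP_pow_pos hd (swalk_diwalk' hd hw)
    have hb0pos : 0 < b k0 := mul_pos hQik0 hPb_pos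
    have habs0 : |(signedP A ^ n) k0 j| = (unsignedP A ^ n) k0 j := by
      have := hk_eq k0
      rw [ht, hb, abs_mul, abs_signedP hd] at this
      exact mul_left_cancel₀ (ne_of_gt hQik0) this
    have ihk := ih hw habs0
    have ht0 : t k0 = ((Msgn A i k0 * s' : ℤ) : ℝ) * b k0 := by
      have e1 : t k0 = signedP A i k0 * (signedP A ^ n) k0 j := rfl
      have e2 : b k0 = unsignedP A i k0 * (unsignedP A ^ n) k0 j := rfl
      rw [e1, e2, ihk, signedP_eq_sign_mul hd hE]
      push_cast
      ring
    have hsum_nonneg : 0 ≤ ∑ k, |t k| := Finset.sum_nonneg fun k _ => abs_nonneg _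
    rcases (abs_eq hsum_nonneg).mp h3 with hcase | hcase
    · -- all terms nonneg
      have hall : ∀ k, t k = |t k| := by
        intro k
        have hzero : ∑ k ∈ Finset.univ, (|t k| - t k) = 0 := by
          rw [Finset.sum_sub_distrib, hcase, sub_self]
        have := (Finset.sum_eq_zero_iff_of_nonneg
          (fun k _ => sub_nonneg.mpr (le_abs_self _))).mp hzero k (Finset.mem_univ k)
        linarith [this]
      have hs1 : ((Msgn A i k0 * s' : ℤ) : ℝ) = 1 := by
        have h4 : t k0 = b k0 := by rw [hall k0, hk_eq k0]
        have h5 := ht0.symm.trans h4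
        have h6 : (((Msgn A i k0 * s' : ℤ) : ℝ) - 1) * b k0 = 0 := by linarith
        rcases mul_eq_zero.mp h6 with h | h
        · linarith
        · exact absurd h (ne_of_gt hb0pos)
      rw [hentry, hbentry, hs1, one_mul, hcase, h2]
    · -- all terms nonpos
      have hall : ∀ k, t k = -|t k| := by
        intro k
        have hzero : ∑ k ∈ Finset.univ, (|t k| + t k) = 0 := by
          rw [Finset.sum_add_distrib, hcase]; ring
        have := (Finset.sum_eq_zero_iff_of_nonneg
          (fun k _ => by linarith [neg_abs_le (t k)])).mp hzero k (Finset.mem_univ k)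
        linarith [this]
      have hs1 : ((Msgn A i k0 * s' : ℤ) : ℝ) = -1 := by
        have h4 : t k0 = -b k0 := by rw [hall k0, hk_eq k0]
        have h5 := ht0.symm.trans h4
        have : (((Msgn A i k0 * s' : ℤ) : ℝ) + 1) * b k0 = 0 := by linarith
        rcases mul_eq_zero.mp this with h | h
        · linarith
        · exact absurd h (ne_of_gt hb0pos)
      rw [hentry, hbentry, hs1, hcase, h2]
      ring

end Key


/-- For an ergodic strictly unbalanced signed digraph, the voter model converges
to the all-(1/2) distribution regardless of the initial distribution. -/
theorem strictly_unbalanced_steady_state_half {V : Type*} [Fintype V] [DecidableEq V]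
    (A : Matrix V V ℝ)
    (herg : SErgodic A)
    (hnb : ¬ SBalancedM A) (hna : ¬ SAntiBalancedM A)
    (x : ℕ → V → ℝ)
    (hx : ∀ t, x (t + 1) = (signedP A).mulVec (x t) + gneg A) :
    Tendsto x atTop (nhds (fun _ => (1 : ℝ) / 2)) := by
  rcases isEmpty_or_nonempty V with hV | hV
  · have hxc : x = fun _ _ => (1 : ℝ) / 2 :=
      funext fun t => funext fun i => (IsEmpty.false i).elim
    rw [hxc]
    exact tendsto_const_nhds
  · obtain ⟨hsc, hap⟩ := herg
    -- every vertex has an outgoing edge, hence positive degree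
    have hcl : ∃ n, 0 < n ∧ ∃ i0, DiWalk (fun i j => A i j ≠ 0) n i0 i0 := by
      by_contra h
      push_neg at h
      have h2 : (2:ℕ) = 1 := by
        apply hap 2
        rintro n hn ⟨i, hw⟩
        exact absurd hw (h n hn i)
      norm_num at h2
    obtain ⟨n0, hn0, i0, hw0⟩ := hcl
    have hedge : ∀ i, ∃ k, A i k ≠ 0 := by
      intro i
      obtain ⟨a, hwa⟩ := hsc i i0
      rcases a with _ | a
      · have hii : i = i0 := hwa
        subst hii
        rcases n0 with _ | n0
        · omega
        · obtain ⟨k, hk, _⟩ := hw0; exact ⟨k, hk⟩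
      · obtain ⟨k, hk, _⟩ := hwa; exact ⟨k, hk⟩
    have hd : ∀ i, 0 < sdeg A i := by
      intro i
      obtain ⟨k, hk⟩ := hedge i
      have hle : |A i k| ≤ sdeg A i :=
        Finset.single_le_sum (f := fun j => |A i j|) (fun j _ => abs_nonneg _)
          (Finset.mem_univ k)
      exact lt_of_lt_of_le (abs_pos.mpr hk) hle
    -- base vertex and closed walks of both signs of equal length p*q
    obtain ⟨v⟩ := hV
    obtain ⟨q, hq⟩ := exists_neg_closed hsc hnb v
    obtain ⟨p, hpodd, hp⟩ := exists_odd_pos_closed hsc hap hna v hq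
    have hq1 : 1 ≤ q := by
      rcases q with _ | q
      · exact absurd hq.2 (by norm_num)
      · omega
    have hp1 : 1 ≤ p := by obtain ⟨k, rfl⟩ := hpodd; omega
    have hposw : SWalk (fun i j => A i j ≠ 0) (Msgn A) (p * q) 1 v v := by
      have h := swalk_repeat hp q
      rw [one_pow, mul_comm] at h
      exact h
    have hnegw : SWalk (fun i j => A i j ≠ 0) (Msgn A) (p * q) (-1) v v := by
      have h := swalk_repeat hq p
      rwa [Odd.neg_one_pow hpodd] at h
    -- from every vertex, two equal-length walks to v of opposite signs
    have hboth : ∀ i, ∃ n, 1 ≤ n ∧ SWalk (fun i j => A i j ≠ 0) (Msgn A) n 1 i v ∧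
        SWalk (fun i j => A i j ≠ 0) (Msgn A) n (-1) i v := by
      intro i
      obtain ⟨a, hwa⟩ := hsc i v
      obtain ⟨s, hs⟩ := diwalk_swalk (σ := Msgn A) hwa
      rcases swalk_sign (msgn_pm A) hs with h | h <;> subst h
      · exact ⟨a + p * q, by nlinarith,
          by simpa using swalk_concat hs hposw, by simpa using swalk_concat hs hnegw⟩
      · exact ⟨a + p * q, by nlinarith,
          by simpa using swalk_concat hs hnegw, by simpa using swalk_concat hs hposw⟩
    choose nf hnf1 hnfp hnfm using hboth
    -- strict row-sum contraction for the window nf i at each row i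
    have hrow : ∀ i, ∑ j, |(signedP A ^ nf i) i j| < 1 := by
      intro i
      have hne : |(signedP A ^ nf i) i v| ≠ (unsignedP A ^ nf i) i v := by
        intro h
        have e1 := signedP_pow_sign hd (hnfp i) h
        have e2 := signedP_pow_sign hd (hnfm i) h
        have hpos := unsignedP_pow_pos hd (swalk_diwalk (hnfp i))
        rw [e1] at e2
        push_cast at e2
        linarith
      have hlt : |(signedP A ^ nf i) i v| < (unsignedP A ^ nf i) i v :=
        lt_of_le_of_ne (abs_signedP_pow_le hd _ i v) hne
      calc ∑ j, |(signedP A ^ nf i) i j| < ∑ j, (unsignedP A ^ nf i) i j :=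
            Finset.sum_lt_sum (fun j _ => abs_signedP_pow_le hd _ i j)
              ⟨v, Finset.mem_univ v, hlt⟩
        _ = 1 := unsignedP_pow_rowsum hd _ i
    have hNe : (Finset.univ : Finset V).Nonempty := ⟨v, Finset.mem_univ v⟩
    set N := Finset.univ.sup' hNe nf with hN
    set c := Finset.univ.sup' hNe (fun i => ∑ j, |(signedP A ^ nf i) i j|) with hc
    have hcle : ∀ i, ∑ j, |(signedP A ^ nf i) i j| ≤ c := fun i =>
      Finset.le_sup' (fun i => ∑ j, |(signedP A ^ nf i) i j|) (Finset.mem_univ i)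
    have hc1 : c < 1 := (Finset.sup'_lt_iff hNe).mpr fun i _ => hrow i
    have hc0 : 0 ≤ c :=
      le_trans (Finset.sum_nonneg fun j _ => abs_nonneg _) (hcle v)
    have hNn : ∀ i, nf i ≤ N := fun i => Finset.le_sup' nf (Finset.mem_univ i)
    have hN1 : 1 ≤ N := le_trans (hnf1 v) (hNn v)
    -- centered dynamics
    set y : ℕ → V → ℝ := fun t i => x t i - 1 / 2 with hydef
    have hPsum : ∀ i, (∑ j, signedP A i j) + 2 * gneg A i = 1 := by
      intro i
      have hkey : ∑ j, (A i j + 2 * max (-(A i j)) 0) = sdeg A i := by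
        unfold sdeg
        apply Finset.sum_congr rfl
        intro j _
        rcases le_or_gt 0 (A i j) with h | h
        · rw [max_eq_right (by linarith), abs_of_nonneg h]; ring
        · rw [max_eq_left (by linarith), abs_of_neg h]; ring
      have hdne : sdeg A i ≠ 0 := ne_of_gt (hd i)
      simp only [signedP, gneg, Matrix.of_apply]
      rw [← Finset.sum_div]
      rw [Finset.sum_add_distrib, ← Finset.mul_sum] at hkey
      field_simp
      linarith [hkey]
    have hy : ∀ t, y (t + 1) = signedP A *ᵥ y t := by
      intro t
      funext i
      have hxi := congrFun (hx t) i
      simp only [Pi.add_apply] at hxi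
      have hmv : ∀ z : V → ℝ, (signedP A *ᵥ z) i = ∑ j, signedP A i j * z j := fun z => by
        simp [Matrix.mulVec, dotProduct]
      simp only [hydef, hmv, hxi]
      have h2 : ∑ j, signedP A i j * (x t j - 1 / 2)
          = (∑ j, signedP A i j * x t j) - (1 / 2) * ∑ j, signedP A i j := by
        rw [Finset.mul_sum, ← Finset.sum_sub_distrib]
        apply Finset.sum_congr rfl
        intro j _
        ring
      rw [h2]
      have := hPsum i
      linarith
    have hyn : ∀ t n, y (t + n) = (signedP A ^ n) *ᵥ y t := by
      intro t n
      induction n with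
      | zero => simp
      | succ n ih =>
        have : t + (n + 1) = (t + n) + 1 := by omega
        rw [this, hy (t + n), ih, pow_succ', ← Matrix.mulVec_mulVec]
    set m : ℕ → ℝ := fun t => Finset.univ.sup' hNe (fun i => |y t i|) with hmdef
    have hym : ∀ t i, |y t i| ≤ m t := fun t i =>
      Finset.le_sup' (fun i => |y t i|) (Finset.mem_univ i)
    have hm0 : ∀ t, 0 ≤ m t :=
      fun t => le_trans (abs_nonneg _) (hym t v)
    have hbound : ∀ (n t : ℕ) (i : V),
        |y (t + n) i| ≤ (∑ j, |(signedP A ^ n) i j|) * m t := by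
      intro n t i
      rw [hyn t n]
      have hmv : ((signedP A ^ n) *ᵥ y t) i = ∑ j, (signedP A ^ n) i j * y t j := by
        simp [Matrix.mulVec, dotProduct]
      rw [hmv]
      calc |∑ j, (signedP A ^ n) i j * y t j| ≤ ∑ j, |(signedP A ^ n) i j * y t j| :=
            Finset.abs_sum_le_sum_abs _ _
        _ ≤ ∑ j, |(signedP A ^ n) i j| * m t := by
            apply Finset.sum_le_sum
            intro j _
            rw [abs_mul]
            exact mul_le_mul_of_nonneg_left (hym t j) (abs_nonneg _)
        _ = (∑ j, |(signedP A ^ n) i j|) * m t := (Finset.sum_mul _ _ _).symm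
    have hsle : ∀ (n : ℕ) (i : V), ∑ j, |(signedP A ^ n) i j| ≤ 1 := fun n i =>
      le_of_le_of_eq (Finset.sum_le_sum fun j _ => abs_signedP_pow_le hd n i j)
        (unsignedP_pow_rowsum hd n i)
    have hmono : ∀ t n, m (t + n) ≤ m t := by
      intro t n
      apply Finset.sup'_le
      intro i _
      exact (hbound n t i).trans (mul_le_of_le_one_left (hm0 t) (hsle n i))
    have hcontr : ∀ t, m (t + N) ≤ c * m t := by
      intro t
      apply Finset.sup'_le
      intro i _
      have hsplit : t + N = (t + (N - nf i)) + nf i := by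
        have := hNn i
        omega
      calc |y (t + N) i| = |y ((t + (N - nf i)) + nf i) i| := by rw [← hsplit]
        _ ≤ (∑ j, |(signedP A ^ nf i) i j|) * m (t + (N - nf i)) := hbound _ _ i
        _ ≤ (∑ j, |(signedP A ^ nf i) i j|) * m t :=
            mul_le_mul_of_nonneg_left (hmono t _)
              (Finset.sum_nonneg fun j _ => abs_nonneg _)
        _ ≤ c * m t := mul_le_mul_of_nonneg_right (hcle i) (hm0 t)
    have hiter : ∀ k, m (k * N) ≤ c ^ k * m 0 := by
      intro k
      induction k with
      | zero => simp
      | succ k ih =>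
        have hsp : (k + 1) * N = k * N + N := by ring
        rw [hsp]
        calc m (k * N + N) ≤ c * m (k * N) := hcontr _
          _ ≤ c * (c ^ k * m 0) := mul_le_mul_of_nonneg_left ih hc0
          _ = c ^ (k + 1) * m 0 := by ring
    have hmt : ∀ t, m t ≤ c ^ (t / N) * m 0 := by
      intro t
      have ht : t / N * N + t % N = t := by
        rw [mul_comm]
        exact Nat.div_add_mod t N
      have h1 : m t ≤ m (t / N * N) := by
        conv_lhs => rw [← ht]
        exact hmono _ _
      exact h1.trans (hiter (t / N))
    have hdiv : Tendsto (fun t : ℕ => t / N) atTop atTop :=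
      Filter.tendsto_atTop_atTop.mpr fun b =>
        ⟨b * N, fun t ht => (Nat.le_div_iff_mul_le (by omega)).mpr ht⟩
    have hg : Tendsto (fun t : ℕ => c ^ (t / N) * m 0) atTop (nhds 0) := by
      have := ((tendsto_pow_atTop_nhds_zero_of_lt_one hc0 hc1).comp hdiv).mul_const (m 0)
      simpa using this
    have hmtend : Tendsto m atTop (nhds 0) := squeeze_zero hm0 hmt hg
    rw [tendsto_pi_nhds]
    intro i
    have hyi : Tendsto (fun t => y t i) atTop (nhds 0) :=
      squeeze_zero_norm (fun t => by simpa [Real.norm_eq_abs] using hym t i) hmtend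
    have hfin : Tendsto (fun t => y t i + 1 / 2) atTop (nhds (0 + 1 / 2)) :=
      hyi.add tendsto_const_nhds
    have hxy : (fun t => x t i) = fun t => y t i + 1 / 2 := by
      funext t
      simp [hydef]
    rw [hxy]
    simpa using hfin
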